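/- arXiv:1309.7115 — 3 statements merged into one kernel-verified Lean document; each statement's English description precedes it below -/
import Mathlib

section
/- Let G be a finite group, V an irreducible complex representation of G with character χ, and let z = (1/|G|²) Σ_{a,b ∈ G} a b a⁻¹ b⁻¹, regarded as an element of the group algebra ℂ[G]. Then z acts on V as the scalar 1/χ(1)². -/
open CategoryTheory

section aux
open Module
variable {G : Type} [Group G] [Fintype G]

omit [Fintype G] in
lemma schur_scalar' (V : FDRep ℂ G) (hV : Simple V) (f : V →ₗ[ℂ] V)
    (hf : ∀ g : G, f ∘ₗ (V.ρ g) = (V.ρ g) ∘ₗ f) :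
    ∃ c : ℂ, f = c • LinearMap.id := by
  let F : V ⟶ V := ⟨FGModuleCat.ofHom f, fun g => by ext v; exact LinearMap.congr_fun (hf g) v⟩
  obtain ⟨c, hc⟩ := CategoryTheory.endomorphism_simple_eq_smul_id (𝕜 := ℂ) F
  refine ⟨c, ?_⟩
  have := congrArg Action.Hom.hom hc
  simp only [F] at this; ext v; have h2 := congrArg (fun φ => (ConcreteCategory.hom φ) v) this.symm; exact h2

omit [Fintype G] in
lemma finrank_pos' (V : FDRep ℂ G) (hV : Simple V) : 0 < finrank ℂ V := by
  rcases Nat.eq_zero_or_pos (finrank ℂ V) with h | h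
  · exfalso
    apply CategoryTheory.id_nonzero V
    ext v
    exact @Subsingleton.elim _ (Module.finrank_zero_iff.mp h) _ _
  · exact h

omit [Fintype G] in
lemma char_one_ne (V : FDRep ℂ G) (hV : Simple V) : (V.character 1 : ℂ) ≠ 0 := by
  rw [FDRep.char_one]
  exact_mod_cast (finrank_pos' V hV).ne'

lemma conj_sum_eq (V : FDRep ℂ G) (hV : Simple V) (b : G) :
    (∑ a : G, V.ρ (a * b * a⁻¹)) =
      ((Fintype.card G : ℂ) * V.character b / V.character 1) • LinearMap.id := by
  have hd := char_one_ne V hV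
  obtain ⟨c, hc⟩ := schur_scalar' V hV (∑ a : G, V.ρ (a * b * a⁻¹)) (fun g => by
    rw [← Module.End.mul_eq_comp, ← Module.End.mul_eq_comp, Finset.sum_mul, Finset.mul_sum]
    refine Fintype.sum_equiv (Equiv.mulLeft g⁻¹) _ _ (fun a => ?_)
    simp only [Equiv.coe_mulLeft]
    rw [← map_mul, ← map_mul]
    congr 1
    group)
  have htr := congrArg (LinearMap.trace ℂ V) hc
  simp only [map_sum, map_smul, LinearMap.trace_id, smul_eq_mul] at htr
  have h1 : ∀ a : G, (LinearMap.trace ℂ V) (V.ρ (a * b * a⁻¹)) = V.character b := fun a =>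
    FDRep.char_conj V b a
  rw [Finset.sum_congr rfl (fun a _ => h1 a), Finset.sum_const, Finset.card_univ,
    nsmul_eq_mul] at htr
  have hc' : c = (Fintype.card G : ℂ) * V.character b / V.character 1 := by
    rw [eq_div_iff hd, FDRep.char_one]
    linear_combination -htr
  rw [hc, hc']

lemma weighted_sum_eq (V : FDRep ℂ G) (hV : Simple V) :
    (∑ b : G, V.character b • V.ρ b⁻¹) =
      ((Fintype.card G : ℂ) / V.character 1) • LinearMap.id := by
  have hd := char_one_ne V hV
  obtain ⟨c, hc⟩ := schur_scalar' V hV (∑ b : G, V.character b • V.ρ b⁻¹) (fun g => by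
    rw [← Module.End.mul_eq_comp, ← Module.End.mul_eq_comp, Finset.sum_mul, Finset.mul_sum]
    refine Fintype.sum_equiv ((Equiv.mulLeft g⁻¹).trans (Equiv.mulRight g)) _ _ (fun b => ?_)
    simp only [Equiv.trans_apply, Equiv.coe_mulLeft, Equiv.coe_mulRight]
    rw [smul_mul_assoc, mul_smul_comm]
    congr 1
    · conv_rhs => rw [show g⁻¹ * b * g = g⁻¹ * b * g⁻¹⁻¹ by rw [inv_inv]]
      rw [FDRep.char_conj]
    · rw [← map_mul, ← map_mul]
      congr 1
      group)
  haveI := hV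
  have hsum : (∑ g : G, V.character g * V.character g⁻¹) = (Fintype.card G : ℂ) := by
    letI : Invertible ((Fintype.card G : ℂ)) :=
      invertibleOfNonzero (by exact_mod_cast Fintype.card_ne_zero)
    have horth := FDRep.char_orthonormal V V
    rw [if_pos ⟨Iso.refl V⟩, Nat.card_eq_fintype_card] at horth
    have horth' : ⅟(Fintype.card G : ℂ) • (∑ g : G, V.character g * V.character g⁻¹) = 1 := by
      rw [invOf_eq_inv, smul_eq_mul]; exact_mod_cast horth
    rw [invOf_eq_inv, inv_smul_eq_iff₀ (by exact_mod_cast Fintype.card_ne_zero)] at horth'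
    simpa using horth'
  have htr := congrArg (LinearMap.trace ℂ V) hc
  simp only [map_sum, map_smul, LinearMap.trace_id, smul_eq_mul] at htr
  have h1 : ∀ b : G, V.character b * (LinearMap.trace ℂ V) (V.ρ b⁻¹)
      = V.character b * V.character b⁻¹ := fun b => rfl
  rw [Finset.sum_congr rfl (fun b _ => h1 b), hsum] at htr
  have hc' : c = (Fintype.card G : ℂ) / V.character 1 := by
    rw [eq_div_iff hd, FDRep.char_one]
    linear_combination -htr
  rw [hc, hc']

end aux

/-- The extensive commutator `z = (1/|G|²) ∑_{a,b} a b a⁻¹ b⁻¹ ∈ ℂ[G]` acts on an irreducible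
complex representation `V` with character `χ` as the scalar `1 / χ(1)²`. -/
theorem stmt7 (G : Type) [Group G] [Fintype G]
    (V : FDRep ℂ G) (hV : Simple V) :
    (((Fintype.card G : ℂ) ^ 2)⁻¹ • ∑ a : G, ∑ b : G, V.ρ (a * b * a⁻¹ * b⁻¹)) =
      ((V.character 1) ^ 2)⁻¹ • (LinearMap.id : V →ₗ[ℂ] V) := by
  have hd := char_one_ne V hV
  have hcard : ((Fintype.card G : ℂ)) ≠ 0 := by exact_mod_cast Fintype.card_ne_zero
  rw [Finset.sum_comm]
  have step : ∀ b : G, (∑ a : G, V.ρ (a * b * a⁻¹ * b⁻¹)) =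
      ((Fintype.card G : ℂ) / V.character 1) • (V.character b • V.ρ b⁻¹) := by
    intro b
    have h1 : ∀ a : G, V.ρ (a * b * a⁻¹ * b⁻¹) = V.ρ (a * b * a⁻¹) * V.ρ b⁻¹ := fun a => by
      rw [← map_mul]
    rw [Finset.sum_congr rfl (fun a _ => h1 a), ← Finset.sum_mul, conj_sum_eq V hV b,
      smul_mul_assoc, ← Module.End.one_eq_id, one_mul, smul_smul]
    congr 1
    field_simp
  rw [Finset.sum_congr rfl (fun b _ => step b), ← Finset.smul_sum, weighted_sum_eq V hV,
    smul_smul, smul_smul]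
  congr 1
  have hdn : ((Module.finrank ℂ V : ℂ)) ≠ 0 := by exact_mod_cast (finrank_pos' V hV).ne'
  rw [FDRep.char_one]
  field_simp
end

section
/- Let G be a finite group. Define a sequence of probability measures μ_m on G by μ_0(g) = 1/|G| for all g ∈ G (the uniform distribution), and μ_{m+1}(g) = (1/|G|) Σ_{(a,x) ∈ G×G, a x a⁻¹ x⁻¹ = g} μ_m(a) for each g ∈ G (i.e. μ_{m+1} is the distribution of the commutator [A, X] where A ∼ μ_m and X is uniform and independent). Then μ_m(e) → 1 as m → ∞, where e is the identity of G. -/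
open Filter

/-- Finite groups are probabilistically nilpotent: starting with the uniform distribution
`μ_0` on a finite group `G`, and letting `μ_{m+1}` be the distribution of the commutator
`[A, X]` with `A ∼ μ_m` and `X` uniform and independent, one has `μ_m(e) → 1`. -/
theorem stmt14 (G : Type*) [Group G] [Fintype G] [DecidableEq G]
    (μ : ℕ → G → ℝ)
    (hμ0 : ∀ g : G, μ 0 g = 1 / Fintype.card G)
    (hμs : ∀ m (g : G), μ (m + 1) g = (1 / Fintype.card G) *
      ∑ p ∈ Finset.univ.filter fun p : G × G => p.1 * p.2 * p.1⁻¹ * p.2⁻¹ = g, μ m p.1) :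
    Tendsto (fun m => μ m 1) atTop (nhds 1) := by
  have hn0 : 0 < Fintype.card G := Fintype.card_pos
  set N : ℝ := (Fintype.card G : ℝ) with hN
  have hnR : (0:ℝ) < N := by rw [hN]; exact_mod_cast hn0
  have hnonneg : ∀ m (g : G), 0 ≤ μ m g := by
    intro m
    induction m with
    | zero => intro g; rw [hμ0]; positivity
    | succ m ih =>
      intro g
      rw [hμs]
      refine mul_nonneg (by positivity) (Finset.sum_nonneg fun p _ => ih p.1)
  have hsum : ∀ m, ∑ g, μ m g = 1 := by
    intro m
    induction m with
    | zero =>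
      simp only [hμ0, Finset.sum_const, Finset.card_univ, nsmul_eq_mul]
      field_simp
      exact hN.symm
    | succ m ih =>
      simp only [hμs]
      rw [← Finset.mul_sum]
      rw [Finset.sum_fiberwise_of_maps_to (fun p _ => Finset.mem_univ _)
        (fun p : G × G => μ m p.1)]
      rw [Fintype.sum_prod_type]
      simp only [Finset.sum_const, Finset.card_univ, nsmul_eq_mul]
      rw [← Finset.mul_sum, ih]
      field_simp
      exact hN.symm
  have hub : ∀ m, μ m 1 ≤ 1 := by
    intro m
    rw [← hsum m]
    exact Finset.single_le_sum (fun g _ => hnonneg m g) (Finset.mem_univ 1)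
  -- key inequality
  have hkey : ∀ m, 1 - μ (m+1) 1 ≤ (1 - 1/N) * (1 - μ m 1) := by
    intro m
    set F : Finset (G × G) :=
      Finset.univ.filter fun p : G × G => p.1 * p.2 * p.1⁻¹ * p.2⁻¹ = 1 with hF
    set A : Finset (G × G) := ({(1:G)} : Finset G) ×ˢ Finset.univ with hA
    set B : Finset (G × G) := Finset.univ.image (fun a : G => (a, a)) with hB
    have hAF : A ⊆ F := by
      intro p hp
      simp only [hA, Finset.mem_product, Finset.mem_singleton] at hp
      simp [hF, hp.1]
    have hBF : B ⊆ F := by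
      intro p hp
      simp only [hB, Finset.mem_image, Finset.mem_univ, true_and] at hp
      obtain ⟨a, ha⟩ := hp
      subst ha
      simp [hF, mul_assoc]
    have hsubset : A ∪ B ⊆ F := Finset.union_subset hAF hBF
    have hAB : A ∩ B = {((1:G), (1:G))} := by
      ext p
      simp only [hA, hB, Finset.mem_inter, Finset.mem_product, Finset.mem_singleton,
        Finset.mem_image, Finset.mem_univ, true_and]
      constructor
      · rintro ⟨⟨h1, -⟩, a, ha⟩
        rw [← ha] at h1 ⊢
        simp only [← h1]
      · rintro rfl
        exact ⟨⟨rfl, trivial⟩, 1, rfl⟩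
    have hsumA : ∑ p ∈ A, μ m p.1 = N * μ m 1 := by
      rw [hA, Finset.sum_product]
      simp [Finset.sum_const, Finset.card_univ, hN, mul_comm]
    have hsumB : ∑ p ∈ B, μ m p.1 = 1 := by
      rw [hB, Finset.sum_image (by intro a _ b _ h; exact (Prod.ext_iff.1 h).1)]
      exact hsum m
    have hunion : ∑ p ∈ A ∪ B, μ m p.1 = N * μ m 1 + 1 - μ m 1 := by
      have := Finset.sum_union_inter (s₁ := A) (s₂ := B) (f := fun p : G × G => μ m p.1)
      rw [hAB, Finset.sum_singleton] at this
      linarith [hsumA, hsumB, this]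
    have hle : N * μ m 1 + 1 - μ m 1 ≤ ∑ p ∈ F, μ m p.1 := by
      rw [← hunion]
      exact Finset.sum_le_sum_of_subset_of_nonneg hsubset (fun p _ _ => hnonneg m p.1)
    have hval : μ (m+1) 1 = (1/N) * ∑ p ∈ F, μ m p.1 := by
      rw [hμs]
    have h2 : (1/N) * (N * μ m 1 + 1 - μ m 1) ≤ μ (m+1) 1 := by
      rw [hval]
      exact mul_le_mul_of_nonneg_left hle (by positivity)
    have h3 : 1/N * (N * μ m 1 + 1 - μ m 1) = μ m 1 + 1/N * (1 - μ m 1) := by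
      field_simp; ring
    have h4 : (1 - 1/N) * (1 - μ m 1) = 1 - μ m 1 - 1/N * (1 - μ m 1) := by ring
    rw [h4]
    linarith [h2, h3]
  have hgeom : ∀ m, 1 - μ m 1 ≤ (1 - 1/N) ^ m := by
    intro m
    induction m with
    | zero => simp; linarith [hnonneg 0 1]
    | succ m ih =>
      have hc : 0 ≤ 1 - 1/N := by
        have : 1/N ≤ 1 := by
          rw [div_le_one hnR, hN]
          exact_mod_cast hn0
        linarith
      calc 1 - μ (m+1) 1 ≤ (1 - 1/N) * (1 - μ m 1) := hkey m
        _ ≤ (1 - 1/N) * (1 - 1/N) ^ m := by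
            apply mul_le_mul_of_nonneg_left ih hc
        _ = (1 - 1/N) ^ (m + 1) := by ring
  have hc0 : 0 ≤ 1 - 1/N := by
    have : 1/N ≤ 1 := by
      rw [div_le_one hnR, hN]; exact_mod_cast hn0
    linarith
  have hc1 : 1 - 1/N < 1 := by
    have : 0 < 1/N := by positivity
    linarith
  have htend0 : Tendsto (fun m => 1 - μ m 1) atTop (nhds 0) := by
    apply squeeze_zero (fun m => by linarith [hub m]) hgeom
    exact tendsto_pow_atTop_nhds_zero_of_lt_one hc0 hc1
  have h := (tendsto_const_nhds (x := (1:ℝ)) (f := atTop)).sub htend0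
  simpa using h
end

section
/- Let G be a finite group. Define central elements of ℂ[G] recursively by γ_0 = Λ = (1/|G|)Σ_{x∈G} x and γ_{m+1} = (1/|G|) Σ_{x∈G, g∈G} c_m(g) · g x g⁻¹ x⁻¹, where γ_m = Σ_{g∈G} c_m(g)·g. Then G is nilpotent if and only if γ_m = 1 (the identity element of ℂ[G]) for some m ≥ 1. -/
open MonoidAlgebra

/-- One step of the commutator-set operation. -/
def commSet (G : Type*) [Group G] : Set G → Set G :=
  fun S => {h | ∃ g ∈ S, ∃ x : G, g * x * g⁻¹ * x⁻¹ = h}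

theorem commSet_image {G H : Type*} [Group G] [Group H] (f : G →* H)
    (hf : Function.Surjective f) (S : Set G) :
    f '' commSet G S = commSet H (f '' S) := by
  ext h
  constructor
  · rintro ⟨a, ⟨g, hg, x, rfl⟩, rfl⟩
    exact ⟨f g, ⟨g, hg, rfl⟩, f x, by simp⟩
  · rintro ⟨-, ⟨g, hg, rfl⟩, y, rfl⟩
    obtain ⟨x, rfl⟩ := hf y
    exact ⟨g * x * g⁻¹ * x⁻¹, ⟨g, hg, x, rfl⟩, by simp⟩

theorem commSet_iter_image {G H : Type*} [Group G] [Group H] (f : G →* H)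
    (hf : Function.Surjective f) : ∀ (m : ℕ),
    f '' ((commSet G)^[m] Set.univ) = (commSet H)^[m] Set.univ := by
  intro m
  induction m with
  | zero => simpa using Set.range_eq_univ.mpr hf
  | succ m ih =>
    rw [Function.iterate_succ_apply', Function.iterate_succ_apply',
      commSet_image f hf, ih]

theorem nilpotent_of_commSet_iter :
    ∀ (m : ℕ) (G : Type u) [Group G],
      ((commSet G)^[m] Set.univ ⊆ {1}) → Group.IsNilpotent G := by
  intro m
  induction m with
  | zero =>
    intro G _ hsub
    have : Subsingleton G := by
      refine ⟨fun a b => ?_⟩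
      have ha : a = 1 := hsub (Set.mem_univ a)
      have hb : b = 1 := hsub (Set.mem_univ b)
      rw [ha, hb]
    infer_instance
  | succ m ih =>
    intro G _ hsub
    rw [Function.iterate_succ_apply'] at hsub
    -- everything in the m-th iterate is central
    have hcen : (commSet G)^[m] Set.univ ⊆ (Subgroup.center G : Set G) := by
      intro g hg
      rw [SetLike.mem_coe, Subgroup.mem_center_iff]
      intro x
      have : g * x * g⁻¹ * x⁻¹ = 1 := hsub ⟨g, hg, x, rfl⟩
      have h1 : g * x * g⁻¹ = x := by rwa [mul_inv_eq_one] at this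
      have h2 : g * x = x * g := by rwa [mul_inv_eq_iff_eq_mul] at h1
      exact h2.symm
    apply of_quotient_center_nilpotent
    apply ih
    rw [← commSet_iter_image (QuotientGroup.mk' (Subgroup.center G))
      (QuotientGroup.mk'_surjective _)]
    rintro - ⟨g, hg, rfl⟩
    simpa using (QuotientGroup.eq_one_iff g).mpr (hcen hg)

/-- Define central elements of `ℂ[G]` by `γ_0 = Λ = (1/|G|) ∑_x x` and
`γ_{m+1} = (1/|G|) ∑_{x,g} c_m(g) • g x g⁻¹ x⁻¹` where `γ_m = ∑_g c_m(g) • g`.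
Then the finite group `G` is nilpotent iff `γ_m = 1` for some `m ≥ 1`. -/
theorem stmt15 (G : Type*) [Group G] [Fintype G] [DecidableEq G]
    (γ : ℕ → MonoidAlgebra ℂ G)
    (hγ0 : γ 0 = (Fintype.card G : ℂ)⁻¹ • ∑ x : G, single x (1 : ℂ))
    (hγs : ∀ m, γ (m + 1) = (Fintype.card G : ℂ)⁻¹ •
      ∑ x : G, ∑ g : G, (γ m).coeff g • single (g * x * g⁻¹ * x⁻¹) (1 : ℂ)) :
    Group.IsNilpotent G ↔ ∃ m : ℕ, 1 ≤ m ∧ γ m = 1 := by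
  have hcard : (Fintype.card G : ℂ) ≠ 0 := Nat.cast_ne_zero.mpr Fintype.card_ne_zero
  have hcardR : (0:ℝ) < (Fintype.card G : ℝ) := by positivity
  -- coefficient formulas
  have key0 : ∀ g : G, (γ 0).coeff g = (Fintype.card G : ℂ)⁻¹ := by
    intro g
    rw [hγ0, coeff_smul, Finsupp.smul_apply, coeff_sum, Finsupp.finset_sum_apply]
    simp [Finsupp.single_apply]
  have key : ∀ (m : ℕ) (h : G), (γ (m+1)).coeff h = (Fintype.card G : ℂ)⁻¹ *
      ∑ x : G, ∑ g : G, (if g * x * g⁻¹ * x⁻¹ = h then (γ m).coeff g else 0) := by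
    intro m h
    rw [hγs m, coeff_smul, Finsupp.smul_apply, coeff_sum, Finsupp.finset_sum_apply, smul_eq_mul]
    congr 1
    refine Finset.sum_congr rfl fun x _ => ?_
    rw [coeff_sum, Finsupp.finset_sum_apply]
    refine Finset.sum_congr rfl fun g _ => ?_
    rw [coeff_smul, Finsupp.smul_apply, coeff_single, Finsupp.single_apply, smul_eq_mul]
    split <;> simp
  -- coefficients are nonnegative reals
  have pos : ∀ m : ℕ, ∃ r : G → ℝ, (∀ g, 0 ≤ r g) ∧ ∀ g, (γ m).coeff g = (r g : ℂ) := by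
    intro m
    induction m with
    | zero =>
      refine ⟨fun _ => (Fintype.card G : ℝ)⁻¹, fun g => by positivity, fun g => ?_⟩
      rw [key0]; push_cast; ring
    | succ m ih =>
      obtain ⟨r, hr0, hr⟩ := ih
      refine ⟨fun h => (Fintype.card G : ℝ)⁻¹ *
          ∑ x : G, ∑ g : G, (if g * x * g⁻¹ * x⁻¹ = h then r g else 0),
        fun h => ?_, fun h => ?_⟩
      · refine mul_nonneg (by positivity) (Finset.sum_nonneg fun x _ =>
          Finset.sum_nonneg fun g _ => ?_)
        split
        · exact hr0 g
        · exact le_refl 0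
      · rw [key m h]
        have hsum : ∀ x g : G, (if g * x * g⁻¹ * x⁻¹ = h then (γ m).coeff g else 0)
            = ((if g * x * g⁻¹ * x⁻¹ = h then r g else 0 : ℝ) : ℂ) := by
          intro x g; rw [hr g]; split <;> simp
        simp only [hsum, ← Complex.ofReal_sum]
        rw [← Complex.ofReal_natCast, ← Complex.ofReal_inv, ← Complex.ofReal_mul]
  -- total mass is 1
  have mass : ∀ m : ℕ, ∑ h : G, (γ m).coeff h = 1 := by
    intro m
    induction m with
    | zero =>
      simp only [key0, Finset.sum_const, Finset.card_univ, nsmul_eq_mul]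
      field_simp
    | succ m ih =>
      simp only [key]
      rw [← Finset.mul_sum, Finset.sum_comm]
      have : ∀ x : G, (∑ h : G, ∑ g : G, (if g * x * g⁻¹ * x⁻¹ = h then (γ m).coeff g else 0)) = 1 := by
        intro x
        rw [Finset.sum_comm]
        simp [Finset.sum_ite_eq, ih]
      simp only [this, Finset.sum_const, Finset.card_univ, nsmul_eq_mul, mul_one]
      field_simp
  -- support is contained in the lower central series
  have supp_lcs : ∀ (m : ℕ) (g : G), (γ m).coeff g ≠ 0 → g ∈ Subgroup.lowerCentralSeries (⊤ : Subgroup G) m := by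
    intro m
    induction m with
    | zero => intro g _; trivial
    | succ m ih =>
      intro h hne
      rw [key m h] at hne
      have hS : (∑ x : G, ∑ g : G, (if g * x * g⁻¹ * x⁻¹ = h then (γ m).coeff g else 0)) ≠ 0 :=
        fun h0 => hne (by rw [h0, mul_zero])
      obtain ⟨x, -, hx⟩ := Finset.exists_ne_zero_of_sum_ne_zero hS
      obtain ⟨g, -, hg⟩ := Finset.exists_ne_zero_of_sum_ne_zero hx
      by_cases hc : g * x * g⁻¹ * x⁻¹ = h
      · rw [← hc]
        rw [lowerCentralSeries_succ]
        have hgm : g ∈ Subgroup.lowerCentralSeries (⊤ : Subgroup G) m := by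
          apply ih
          rwa [if_pos hc] at hg
        exact Subgroup.commutator_mem_commutator hgm (Subgroup.mem_top x)
      · rw [if_neg hc] at hg; exact absurd rfl hg
  -- support contains the iterated commutator sets
  have supp_comm : ∀ m : ℕ, (commSet G)^[m] Set.univ ⊆ {g : G | (γ m).coeff g ≠ 0} := by
    intro m
    induction m with
    | zero => intro g _; rw [Set.mem_setOf_eq, key0]; exact inv_ne_zero hcard
    | succ m ih =>
      rw [Function.iterate_succ_apply']
      rintro - ⟨g₀, hg₀, x₀, rfl⟩
      have hg₀' : (γ m).coeff g₀ ≠ 0 := ih hg₀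
      obtain ⟨r, hr0, hr⟩ := pos m
      have hrg₀ : 0 < r g₀ := by
        rcases lt_or_eq_of_le (hr0 g₀) with h | h
        · exact h
        · exact absurd (by rw [hr g₀, ← h]; norm_num) hg₀'
      rw [Set.mem_setOf_eq, key]
      have hsum : ∀ x : G, ∀ g : G,
          (if g * x * g⁻¹ * x⁻¹ = g₀ * x₀ * g₀⁻¹ * x₀⁻¹ then (γ m).coeff g else 0)
          = ((if g * x * g⁻¹ * x⁻¹ = g₀ * x₀ * g₀⁻¹ * x₀⁻¹ then r g else 0 : ℝ) : ℂ) := by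
        intro x g; rw [hr g]; split <;> simp
      simp only [hsum]
      push_cast [← Complex.ofReal_sum]
      rw [← Complex.ofReal_natCast, ← Complex.ofReal_inv, ← Complex.ofReal_mul]
      rw [Complex.ofReal_ne_zero]
      have hpos : (0:ℝ) < ∑ x : G, ∑ g : G,
          (if g * x * g⁻¹ * x⁻¹ = g₀ * x₀ * g₀⁻¹ * x₀⁻¹ then r g else 0) := by
        refine Finset.sum_pos' (fun x _ => Finset.sum_nonneg fun g _ => ?_)
          ⟨x₀, Finset.mem_univ x₀, ?_⟩
        · split
          · exact hr0 g
          · exact le_refl 0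
        · refine Finset.sum_pos' (fun g _ => ?_) ⟨g₀, Finset.mem_univ g₀, ?_⟩
          · split
            · exact hr0 g
            · exact le_refl 0
          · rw [if_pos rfl]; exact hrg₀
      positivity
  -- if γ m = 1 then γ (m+1) = 1
  have step1 : ∀ m : ℕ, γ m = 1 → γ (m + 1) = 1 := by
    intro m hm
    ext h
    rw [key m h]
    have : ∀ g : G, (γ m).coeff g = (if g = 1 then (1:ℂ) else 0) := by
      intro g
      rw [hm, MonoidAlgebra.one_def, coeff_single, Finsupp.single_apply]
      simp [eq_comm]
    simp only [this]
    rw [MonoidAlgebra.one_def, coeff_single, Finsupp.single_apply]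
    have inner : ∀ x : G, (∑ g : G, (if g * x * g⁻¹ * x⁻¹ = h then
        (if g = 1 then (1:ℂ) else 0) else 0)) = (if (1:G) = h then 1 else 0) := by
      intro x
      rw [Finset.sum_eq_single 1]
      · simp
      · intro g _ hg; simp [hg]
      · intro hmem; exact absurd (Finset.mem_univ 1) hmem
    simp only [inner, Finset.sum_const, Finset.card_univ, nsmul_eq_mul]
    rw [← mul_assoc, inv_mul_cancel₀ hcard, one_mul]
  constructor
  · intro hnil
    obtain ⟨n, hn⟩ := nilpotent_iff_lowerCentralSeries.mp hnil
    have hγn : γ n = 1 := by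
      ext g
      rw [MonoidAlgebra.one_def, coeff_single, Finsupp.single_apply]
      by_cases hg : g = 1
      · subst hg
        rw [if_pos rfl]
        have := mass n
        rwa [Finset.sum_eq_single 1 (fun b _ hb => by
          by_contra hne
          have := supp_lcs n b hne
          rw [hn] at this
          exact hb (Subgroup.mem_bot.mp this))
          (fun hmem => absurd (Finset.mem_univ 1) hmem)] at this
      · rw [if_neg (fun h => hg h.symm)]
        by_contra hne
        have := supp_lcs n g hne
        rw [hn] at this
        exact hg (Subgroup.mem_bot.mp this)
    exact ⟨n + 1, Nat.le_add_left 1 n, step1 n hγn⟩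
  · rintro ⟨m, -, hm⟩
    apply nilpotent_of_commSet_iter m
    intro g hg
    have := supp_comm m hg
    rw [Set.mem_setOf_eq, hm, MonoidAlgebra.one_def, coeff_single, Finsupp.single_apply] at this
    by_contra hg1
    simp only [Set.mem_singleton_iff] at hg1
    rw [if_neg (fun h => hg1 h.symm)] at this
    exact this rfl
end
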